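/- Let U be a unitary on ℂⁿ ⊗ ℂᵉ, and let P, Q be orthogonal projectors on ℂᵉ with PQ = 0 and P + Q = 1 and P ≠ 0. Define the encoding ℰ(M) = U(M ⊗ P + M̄ ⊗ Q)U† for n×n matrices M. Let σ be a density matrix on ℂᵉ with Pσ = σ, and define ℰ_state(ρ) = U(ρ ⊗ σ)U†. Then for every Hermitian n×n matrix H, every density matrix ρ on ℂⁿ, and every t ∈ ℝ: exp(−i·ℰ(H)·t) · ℰ_state(ρ) · exp(i·ℰ(H)·t) = ℰ_state( exp(−iHt) · ρ · exp(iHt) ), where exp denotes the matrix exponential. -/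

import Mathlib

open scoped Matrix Kronecker ComplexOrder

open Matrix

private lemma exp_mul_kron {n e : ℕ} (c : ℂ)
    (K : Matrix (Fin n × Fin e) (Fin n × Fin e) ℂ)
    (σ : Matrix (Fin e) (Fin e) ℂ)
    (H : Matrix (Fin n) (Fin n) ℂ)
    (hK : ∀ X : Matrix (Fin n) (Fin n) ℂ, K * (X ⊗ₖ σ) = (H * X) ⊗ₖ σ)
    (ρ : Matrix (Fin n) (Fin n) ℂ) :
    NormedSpace.exp (c • K) * (ρ ⊗ₖ σ) = (NormedSpace.exp (c • H) * ρ) ⊗ₖ σ := by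
  letI : SeminormedRing (Matrix (Fin n × Fin e) (Fin n × Fin e) ℂ) :=
    Matrix.linftyOpSemiNormedRing
  letI : NormedRing (Matrix (Fin n × Fin e) (Fin n × Fin e) ℂ) := Matrix.linftyOpNormedRing
  letI : NormedAlgebra ℂ (Matrix (Fin n × Fin e) (Fin n × Fin e) ℂ) :=
    Matrix.linftyOpNormedAlgebra
  letI : SeminormedRing (Matrix (Fin n) (Fin n) ℂ) := Matrix.linftyOpSemiNormedRing
  letI : NormedRing (Matrix (Fin n) (Fin n) ℂ) := Matrix.linftyOpNormedRing
  letI : NormedAlgebra ℂ (Matrix (Fin n) (Fin n) ℂ) := Matrix.linftyOpNormedAlgebra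
  have hpow : ∀ k : ℕ, (c • K) ^ k * (ρ ⊗ₖ σ) = ((c • H) ^ k * ρ) ⊗ₖ σ := by
    intro k
    induction k with
    | zero => simp
    | succ k ih =>
      rw [pow_succ', Matrix.mul_assoc, ih, pow_succ', smul_mul_assoc, hK,
        ← Matrix.smul_kronecker, ← smul_mul_assoc, Matrix.mul_assoc]
  let F : Matrix (Fin n) (Fin n) ℂ →ₗ[ℂ] Matrix (Fin n × Fin e) (Fin n × Fin e) ℂ :=
    { toFun := fun X => (X * ρ) ⊗ₖ σ
      map_add' := fun X Y => by rw [Matrix.add_mul, Matrix.add_kronecker]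
      map_smul' := fun a X => by rw [smul_mul_assoc, Matrix.smul_kronecker]; rfl }
  have hterm : ∀ k : ℕ, (((k.factorial : ℂ))⁻¹ • (c • K) ^ k) * (ρ ⊗ₖ σ)
      = (LinearMap.toContinuousLinearMap F) (((k.factorial : ℂ))⁻¹ • (c • H) ^ k) := by
    intro k
    rw [smul_mul_assoc, hpow]
    show _ = F (((k.factorial : ℂ))⁻¹ • (c • H) ^ k)
    rw [F.map_smul]
    rfl
  simp only [NormedSpace.exp_eq_tsum ℂ]
  erw [← (NormedSpace.expSeries_summable' (𝕂 := ℂ) (c • K)).tsum_mul_right (ρ ⊗ₖ σ)]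
  erw [tsum_congr hterm]
  erw [← (LinearMap.toContinuousLinearMap F).map_tsum
    (NormedSpace.expSeries_summable' (𝕂 := ℂ) (c • H))]
  rfl

private lemma kron_mul_exp {n e : ℕ} (c : ℂ)
    (K : Matrix (Fin n × Fin e) (Fin n × Fin e) ℂ)
    (σ : Matrix (Fin e) (Fin e) ℂ)
    (H : Matrix (Fin n) (Fin n) ℂ)
    (hK : ∀ X : Matrix (Fin n) (Fin n) ℂ, (X ⊗ₖ σ) * K = (X * H) ⊗ₖ σ)
    (ρ : Matrix (Fin n) (Fin n) ℂ) :
    (ρ ⊗ₖ σ) * NormedSpace.exp (c • K) = (ρ * NormedSpace.exp (c • H)) ⊗ₖ σ := by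
  letI : SeminormedRing (Matrix (Fin n × Fin e) (Fin n × Fin e) ℂ) :=
    Matrix.linftyOpSemiNormedRing
  letI : NormedRing (Matrix (Fin n × Fin e) (Fin n × Fin e) ℂ) := Matrix.linftyOpNormedRing
  letI : NormedAlgebra ℂ (Matrix (Fin n × Fin e) (Fin n × Fin e) ℂ) :=
    Matrix.linftyOpNormedAlgebra
  letI : SeminormedRing (Matrix (Fin n) (Fin n) ℂ) := Matrix.linftyOpSemiNormedRing
  letI : NormedRing (Matrix (Fin n) (Fin n) ℂ) := Matrix.linftyOpNormedRing
  letI : NormedAlgebra ℂ (Matrix (Fin n) (Fin n) ℂ) := Matrix.linftyOpNormedAlgebra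
  have hpow : ∀ k : ℕ, (ρ ⊗ₖ σ) * (c • K) ^ k = (ρ * (c • H) ^ k) ⊗ₖ σ := by
    intro k
    induction k with
    | zero => simp
    | succ k ih =>
      rw [pow_succ, ← Matrix.mul_assoc, ih, pow_succ, mul_smul_comm, hK,
        ← Matrix.smul_kronecker, ← mul_smul_comm, Matrix.mul_assoc]
  let F : Matrix (Fin n) (Fin n) ℂ →ₗ[ℂ] Matrix (Fin n × Fin e) (Fin n × Fin e) ℂ :=
    { toFun := fun X => (ρ * X) ⊗ₖ σ
      map_add' := fun X Y => by rw [Matrix.mul_add, Matrix.add_kronecker]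
      map_smul' := fun a X => by rw [mul_smul_comm, Matrix.smul_kronecker]; rfl }
  have hterm : ∀ k : ℕ, (ρ ⊗ₖ σ) * (((k.factorial : ℂ))⁻¹ • (c • K) ^ k)
      = (LinearMap.toContinuousLinearMap F) (((k.factorial : ℂ))⁻¹ • (c • H) ^ k) := by
    intro k
    rw [mul_smul_comm, hpow]
    show _ = F (((k.factorial : ℂ))⁻¹ • (c • H) ^ k)
    rw [F.map_smul]
    rfl
  simp only [NormedSpace.exp_eq_tsum ℂ]
  erw [← (NormedSpace.expSeries_summable' (𝕂 := ℂ) (c • K)).tsum_mul_left (ρ ⊗ₖ σ)]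
  erw [tsum_congr hterm]
  erw [← (LinearMap.toContinuousLinearMap F).map_tsum
    (NormedSpace.expSeries_summable' (𝕂 := ℂ) (c • H))]
  rfl

/-- For an encoding `ℰ(M) = U(M ⊗ P + M̄ ⊗ Q)U†` (with `P ≠ 0`, a "standard" encoding)
and state encoding `ℰ_state(ρ) = U(ρ ⊗ σ)U†` with `Pσ = σ`, time evolution under `ℰ(H)`
simulates time evolution under `H`:
`exp(−iℰ(H)t) ℰ_state(ρ) exp(iℰ(H)t) = ℰ_state(exp(−iHt) ρ exp(iHt))`. -/
theorem encoding_simulates_time_evolution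
    {n e : ℕ}
    (U : Matrix (Fin n × Fin e) (Fin n × Fin e) ℂ)
    (hU : U ∈ Matrix.unitaryGroup (Fin n × Fin e) ℂ)
    (P Q : Matrix (Fin e) (Fin e) ℂ)
    (hPherm : P.IsHermitian) (hPproj : P * P = P)
    (hQherm : Q.IsHermitian) (hQproj : Q * Q = Q)
    (hPQ : P * Q = 0) (hPQ1 : P + Q = 1) (hPne : P ≠ 0)
    (σ : Matrix (Fin e) (Fin e) ℂ) (hσ : σ.PosSemidef) (hσtr : σ.trace = 1)
    (hPσ : P * σ = σ)
    (H : Matrix (Fin n) (Fin n) ℂ) (hH : H.IsHermitian)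
    (ρ : Matrix (Fin n) (Fin n) ℂ) (hρ : ρ.PosSemidef) (hρtr : ρ.trace = 1)
    (t : ℝ) :
    NormedSpace.exp ((-(Complex.I * (t : ℂ))) •
        (U * (H ⊗ₖ P + (H.map (starRingEnd ℂ)) ⊗ₖ Q) * Uᴴ)) *
      (U * (ρ ⊗ₖ σ) * Uᴴ) *
      NormedSpace.exp ((Complex.I * (t : ℂ)) •
        (U * (H ⊗ₖ P + (H.map (starRingEnd ℂ)) ⊗ₖ Q) * Uᴴ))
    = U * ((NormedSpace.exp ((-(Complex.I * (t : ℂ))) • H) * ρ *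
        NormedSpace.exp ((Complex.I * (t : ℂ)) • H)) ⊗ₖ σ) * Uᴴ := by
  set K := H ⊗ₖ P + (H.map (starRingEnd ℂ)) ⊗ₖ Q with hK
  -- basic projector facts
  have hQσ : Q * σ = 0 := by
    have : Q = 1 - P := by rw [← hPQ1]; abel
    rw [this, Matrix.sub_mul, Matrix.one_mul, hPσ, sub_self]
  have hσP : σ * P = σ := by
    calc σ * P = σᴴ * Pᴴ := by rw [hσ.1, hPherm]
      _ = (P * σ)ᴴ := (Matrix.conjTranspose_mul _ _).symm
      _ = σᴴ := by rw [hPσ]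
      _ = σ := hσ.1
  have hσQ : σ * Q = 0 := by
    have : Q = 1 - P := by rw [← hPQ1]; abel
    rw [this, Matrix.mul_sub, Matrix.mul_one, hσP, sub_self]
  have hKl : ∀ X : Matrix (Fin n) (Fin n) ℂ, K * (X ⊗ₖ σ) = (H * X) ⊗ₖ σ := by
    intro X
    rw [hK, Matrix.add_mul, ← Matrix.mul_kronecker_mul, ← Matrix.mul_kronecker_mul, hPσ, hQσ]
    simp
  have hKr : ∀ X : Matrix (Fin n) (Fin n) ℂ, (X ⊗ₖ σ) * K = (X * H) ⊗ₖ σ := by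
    intro X
    rw [hK, Matrix.mul_add, ← Matrix.mul_kronecker_mul, ← Matrix.mul_kronecker_mul, hσP, hσQ]
    simp
  -- unitarity facts
  have h1 : Uᴴ * U = 1 := by
    have := hU.1
    rwa [Matrix.star_eq_conjTranspose] at this
  have h1' : U * Uᴴ = 1 := by
    have := hU.2
    rwa [Matrix.star_eq_conjTranspose] at this
  have hUu : IsUnit U := ⟨⟨U, Uᴴ, h1', h1⟩, rfl⟩
  have hUinv : U⁻¹ = Uᴴ := Matrix.inv_eq_left_inv h1
  have hconj : ∀ c : ℂ, NormedSpace.exp (c • (U * K * Uᴴ))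
      = U * NormedSpace.exp (c • K) * Uᴴ := by
    intro c
    have heq : c • (U * K * Uᴴ) = U * (c • K) * Uᴴ := by
      rw [mul_smul_comm, smul_mul_assoc]
    rw [heq, ← hUinv, Matrix.exp_conj _ _ hUu, hUinv]
  rw [hconj, hconj]
  have hmid : ∀ A B : Matrix (Fin n × Fin e) (Fin n × Fin e) ℂ,
      Uᴴ * (U * (A * (Uᴴ * (U * B)))) = A * B := by
    intro A B
    rw [← Matrix.mul_assoc Uᴴ U B, h1, Matrix.one_mul, ← Matrix.mul_assoc Uᴴ U, h1,
      Matrix.one_mul]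
  calc U * NormedSpace.exp ((-(Complex.I * (t : ℂ))) • K) * Uᴴ * (U * (ρ ⊗ₖ σ) * Uᴴ) *
        (U * NormedSpace.exp ((Complex.I * (t : ℂ)) • K) * Uᴴ)
      = U * (NormedSpace.exp ((-(Complex.I * (t : ℂ))) • K) *
          ((ρ ⊗ₖ σ) * NormedSpace.exp ((Complex.I * (t : ℂ)) • K))) * Uᴴ := by
        simp only [Matrix.mul_assoc]
        rw [← Matrix.mul_assoc Uᴴ U, h1, Matrix.one_mul, ← Matrix.mul_assoc Uᴴ U, h1,
          Matrix.one_mul]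
    _ = U * ((NormedSpace.exp ((-(Complex.I * (t : ℂ))) • H) * ρ *
        NormedSpace.exp ((Complex.I * (t : ℂ)) • H)) ⊗ₖ σ) * Uᴴ := by
        rw [kron_mul_exp _ _ _ _ hKr, exp_mul_kron _ _ _ _ hKl]
        simp only [Matrix.mul_assoc]
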